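/- Suppose X and Y are random variables with finite support on an abelian group G. Then H(X − Y) ≤ (2/3) H(X) + (2/3) H(Y) + (1/2) H(X + Y). -/

import Mathlib

set_option linter.unusedSectionVars false
set_option maxHeartbeats 1000000

open MeasureTheory ProbabilityTheory Real

/-- Shannon entropy (natural log) of a finitely-valued random variable. -/
noncomputable def ent {Ω S : Type*} [MeasurableSpace Ω] [Fintype S]
    (μ : Measure Ω) (X : Ω → S) : ℝ :=
  ∑ s : S, Real.negMulLog ((μ (X ⁻¹' {s})).toReal)

open Finset Real

namespace EntAux

attribute [local instance] Classical.propDecidable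

variable {A : Type*} [Fintype A]

noncomputable def fm (p : A → ℝ) {B : Type*} (f : A → B) (b : B) : ℝ :=
  ∑ a, if f a = b then p a else 0

noncomputable def Hm (p : A → ℝ) {B : Type*} [Fintype B] (f : A → B) : ℝ :=
  ∑ b, Real.negMulLog (fm p f b)

variable {B C D : Type*} [Fintype B] [Fintype C] [Fintype D]
variable {p : A → ℝ}

lemma fm_nonneg (hp : ∀ a, 0 ≤ p a) (f : A → B) (b : B) : 0 ≤ fm p f b := by
  refine Finset.sum_nonneg fun a _ => ?_
  split <;> simp [hp a]

lemma le_fm (hp : ∀ a, 0 ≤ p a) (f : A → B) (a : A) : p a ≤ fm p f (f a) := by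
  have h1 : p a = if f a = f a then p a else 0 := by simp
  rw [h1]
  show _ ≤ ∑ a', if f a' = f a then p a' else 0
  exact Finset.single_le_sum (f := fun a' => if f a' = f a then p a' else 0)
    (fun a' _ => by split <;> simp [hp _]) (Finset.mem_univ a)

lemma sum_fm (f : A → B) : ∑ b, fm p f b = ∑ a, p a := by
  simp only [fm]
  rw [Finset.sum_comm]
  refine Finset.sum_congr rfl fun a _ => ?_
  simp

lemma fm_eq_zero_of (hp : ∀ a, 0 ≤ p a) {f : A → B} {b : B} (h : fm p f b = 0)
    {a : A} (ha : f a = b) : p a = 0 := by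
  have h2 := le_fm hp f a
  rw [ha, h] at h2
  linarith [hp a]

lemma fm_id (b : A) : fm p id b = p b := by
  simp [fm, Finset.sum_ite_eq']

/-- grouping: fibers of `g ∘ f` decompose into fibers of `f`. -/
lemma fm_comp (f : A → B) (g : B → C) (c : C) :
    fm p (fun a => g (f a)) c = ∑ b, if g b = c then fm p f b else 0 := by
  simp only [fm]
  rw [eq_comm]
  calc ∑ b, (if g b = c then ∑ a, if f a = b then p a else 0 else 0)
      = ∑ b, ∑ a, if g b = c ∧ f a = b then p a else 0 := by
        refine Finset.sum_congr rfl fun b _ => ?_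
        by_cases h : g b = c
        · simp [h]
        · simp [h]
    _ = ∑ a, ∑ b, if g b = c ∧ f a = b then p a else 0 := Finset.sum_comm
    _ = ∑ a : A, if g (f a) = c then p a else 0 := by
        refine Finset.sum_congr rfl fun a _ => ?_
        rw [Finset.sum_eq_single (f a)]
        · by_cases h : g (f a) = c <;> simp [h]
        · intro b _ hb
          by_cases h : g b = c <;> simp [h, Ne.symm hb]
        · simp

/-- subadditivity of negMulLog over finite sums of nonnegatives -/
lemma negMulLog_sum_le {s : Finset B} (x : B → ℝ) (hx : ∀ b ∈ s, 0 ≤ x b) :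
    Real.negMulLog (∑ b ∈ s, x b) ≤ ∑ b ∈ s, Real.negMulLog (x b) := by
  have hsum : ∀ b ∈ s, x b ≤ ∑ b' ∈ s, x b' := fun b hb =>
    Finset.single_le_sum hx hb
  have h : ∀ b ∈ s, -(x b) * Real.log (∑ b' ∈ s, x b') ≤ Real.negMulLog (x b) := by
    intro b hb
    rcases eq_or_lt_of_le (hx b hb) with h0 | h0
    · simp [← h0, Real.negMulLog]
    · have hlog : Real.log (x b) ≤ Real.log (∑ b' ∈ s, x b') :=
        Real.log_le_log h0 (hsum b hb)
      have := mul_le_mul_of_nonpos_left hlog (by linarith : -(x b) ≤ 0)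
      simpa [Real.negMulLog, neg_mul] using this
  have key : ∑ b ∈ s, -(x b) * Real.log (∑ b' ∈ s, x b')
      = Real.negMulLog (∑ b ∈ s, x b) := by
    rw [← Finset.sum_mul, Real.negMulLog, neg_mul, ← neg_mul]
    congr 1
    rw [Finset.sum_neg_distrib]
  rw [← key]
  exact Finset.sum_le_sum h

/-- entropy decreases under (deterministic) maps -/
lemma Hm_comp_le (hp : ∀ a, 0 ≤ p a) (f : A → B) (g : B → C) :
    Hm p (fun a => g (f a)) ≤ Hm p f := by
  have h1 : ∀ c, Real.negMulLog (fm p (fun a => g (f a)) c)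
      ≤ ∑ b, if g b = c then Real.negMulLog (fm p f b) else 0 := by
    intro c
    rw [fm_comp]
    refine (negMulLog_sum_le _ (fun b _ => ?_)).trans_eq ?_
    · split <;> simp [fm_nonneg hp]
    · refine Finset.sum_congr rfl fun b _ => ?_
      split <;> simp
  calc Hm p (fun a => g (f a)) ≤ ∑ c, ∑ b, if g b = c then Real.negMulLog (fm p f b) else 0 :=
        Finset.sum_le_sum fun c _ => h1 c
    _ = Hm p f := by
        rw [Finset.sum_comm, Hm]
        refine Finset.sum_congr rfl fun b _ => ?_
        simp

/-- entropy only depends on values on the support -/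
lemma Hm_congr (hp : ∀ a, 0 ≤ p a) {f g : A → B} (h : ∀ a, p a ≠ 0 → f a = g a) :
    Hm p f = Hm p g := by
  have : ∀ b, fm p f b = fm p g b := by
    intro b
    refine Finset.sum_congr rfl fun a _ => ?_
    by_cases hpa : p a = 0
    · simp [hpa]
    · rw [h a hpa]
  simp only [Hm, this]



namespace Submod

variable {A : Type*} [Fintype A] {B C D : Type*} [Fintype B] [Fintype C] [Fintype D]
variable {p : A → ℝ}

/-- submodularity: H(f,g,h) + H(h) ≤ H(f,h) + H(g,h) -/
lemma Hm_submod (hp : ∀ a, 0 ≤ p a) (f : A → B) (g : A → C) (h : A → D) :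
    Hm p (fun a => (f a, g a, h a)) + Hm p h
      ≤ Hm p (fun a => (f a, h a)) + Hm p (fun a => (g a, h a)) := by
  set P3 : B × C × D → ℝ := fm p (fun a => (f a, g a, h a)) with hP3
  set PBD : B × D → ℝ := fm p (fun a => (f a, h a)) with hPBD
  set PCD : C × D → ℝ := fm p (fun a => (g a, h a)) with hPCD
  set PD : D → ℝ := fm p h with hPD
  have hP3n : ∀ x, 0 ≤ P3 x := fun x => fm_nonneg hp _ x
  have hPBDn : ∀ x, 0 ≤ PBD x := fun x => fm_nonneg hp _ x
  have hPCDn : ∀ x, 0 ≤ PCD x := fun x => fm_nonneg hp _ x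
  have hPDn : ∀ x, 0 ≤ PD x := fun x => fm_nonneg hp _ x
  -- marginal identities
  have M1 : ∀ b d, PBD (b, d) = ∑ c, P3 (b, c, d) := by
    intro b d
    simp only [hPBD, hP3, fm]
    rw [Finset.sum_comm]
    refine Finset.sum_congr rfl fun a _ => ?_
    by_cases hb : f a = b <;> by_cases hd : h a = d <;>
      simp [hb, hd, Prod.ext_iff, Finset.sum_ite_eq]
  have M2 : ∀ c d, PCD (c, d) = ∑ b, P3 (b, c, d) := by
    intro c d
    simp only [hPCD, hP3, fm]
    rw [Finset.sum_comm]
    refine Finset.sum_congr rfl fun a _ => ?_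
    by_cases hc : g a = c <;> by_cases hd : h a = d <;>
      simp [hc, hd, Prod.ext_iff, Finset.sum_ite_eq]
  have M3 : ∀ d, PD d = ∑ b, PBD (b, d) := by
    intro d
    simp only [hPD, hPBD, fm]
    rw [Finset.sum_comm]
    refine Finset.sum_congr rfl fun a _ => ?_
    by_cases hd : h a = d <;> simp [hd, Prod.ext_iff, Finset.sum_ite_eq]
  have M4 : ∀ d, PD d = ∑ c, PCD (c, d) := by
    intro d
    simp only [hPD, hPCD, fm]
    rw [Finset.sum_comm]
    refine Finset.sum_congr rfl fun a _ => ?_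
    by_cases hd : h a = d <;> simp [hd, Prod.ext_iff, Finset.sum_ite_eq]
  -- re-ordering helper
  have comm3 : ∀ (F : B → C → D → ℝ), (∑ d, ∑ b, ∑ c, F b c d) = ∑ b, ∑ c, ∑ d, F b c d := by
    intro F
    rw [Finset.sum_comm]
    exact Finset.sum_congr rfl fun b _ => Finset.sum_comm
  -- expansions of the four entropies as triple sums
  have T3 : Hm p (fun a => (f a, g a, h a)) = ∑ b, ∑ c, ∑ d, Real.negMulLog (P3 (b, c, d)) := by
    rw [Hm, Fintype.sum_prod_type]
    exact Finset.sum_congr rfl fun b _ => Fintype.sum_prod_type _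
  have TBD : Hm p (fun a => (f a, h a))
      = ∑ b, ∑ c, ∑ d, (-(P3 (b, c, d)) * Real.log (PBD (b, d))) := by
    rw [Hm, Fintype.sum_prod_type]
    refine Finset.sum_congr rfl fun b _ => ?_
    rw [Finset.sum_comm]
    refine Finset.sum_congr rfl fun d _ => ?_
    rw [← Finset.sum_mul, Finset.sum_neg_distrib, ← M1, Real.negMulLog, neg_mul]
  have TCD : Hm p (fun a => (g a, h a))
      = ∑ b, ∑ c, ∑ d, (-(P3 (b, c, d)) * Real.log (PCD (c, d))) := by
    rw [Hm, Fintype.sum_prod_type]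
    have inner : ∀ c d, Real.negMulLog (PCD (c, d))
        = ∑ b, (-(P3 (b, c, d)) * Real.log (PCD (c, d))) := by
      intro c d
      rw [← Finset.sum_mul, Finset.sum_neg_distrib, ← M2, Real.negMulLog, neg_mul]
    calc (∑ c, ∑ d, Real.negMulLog (PCD (c, d)))
        = ∑ c, ∑ d, ∑ b, (-(P3 (b, c, d)) * Real.log (PCD (c, d))) := by
          exact Finset.sum_congr rfl fun c _ => Finset.sum_congr rfl fun d _ => inner c d
      _ = ∑ c, ∑ b, ∑ d, (-(P3 (b, c, d)) * Real.log (PCD (c, d))) :=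
          Finset.sum_congr rfl fun c _ => Finset.sum_comm
      _ = ∑ b, ∑ c, ∑ d, (-(P3 (b, c, d)) * Real.log (PCD (c, d))) := Finset.sum_comm
  have TD : Hm p h = ∑ b, ∑ c, ∑ d, (-(P3 (b, c, d)) * Real.log (PD d)) := by
    rw [Hm, ← comm3]
    refine Finset.sum_congr rfl fun d _ => ?_
    have : ∀ b, (∑ c, -(P3 (b, c, d)) * Real.log (PD d)) = -(PBD (b, d)) * Real.log (PD d) := by
      intro b
      rw [← Finset.sum_mul, Finset.sum_neg_distrib, ← M1]
    calc Real.negMulLog (PD d) = -(PD d) * Real.log (PD d) := by rw [Real.negMulLog, neg_mul]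
      _ = ∑ b, (-(PBD (b, d)) * Real.log (PD d)) := by
          rw [← Finset.sum_mul, Finset.sum_neg_distrib, ← M3]
      _ = ∑ b, ∑ c, -(P3 (b, c, d)) * Real.log (PD d) :=
          Finset.sum_congr rfl fun b _ => (this b).symm
  -- pointwise key inequality
  have key : ∀ b c d, Real.negMulLog (P3 (b, c, d)) + (-(P3 (b, c, d)) * Real.log (PD d))
      ≤ (-(P3 (b, c, d)) * Real.log (PBD (b, d))) + (-(P3 (b, c, d)) * Real.log (PCD (c, d)))
        + (PBD (b, d) * PCD (c, d) / PD d - P3 (b, c, d)) := by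
    intro b c d
    rcases eq_or_lt_of_le (hP3n (b, c, d)) with h0 | h0
    · rw [← h0]
      have : 0 ≤ PBD (b, d) * PCD (c, d) / PD d :=
        div_nonneg (mul_nonneg (hPBDn _) (hPCDn _)) (hPDn _)
      simp only [Real.negMulLog_zero, neg_zero, zero_mul, add_zero, zero_add, sub_zero]
      linarith
    · have hBD : 0 < PBD (b, d) := by
        rw [M1]
        exact lt_of_lt_of_le h0 (Finset.single_le_sum (fun c' _ => hP3n (b, c', d))
          (Finset.mem_univ c))
      have hCD : 0 < PCD (c, d) := by
        rw [M2]
        exact lt_of_lt_of_le h0 (Finset.single_le_sum (fun b' _ => hP3n (b', c, d))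
          (Finset.mem_univ b))
      have hD : 0 < PD d := by
        rw [M3]
        exact lt_of_lt_of_le hBD (Finset.single_le_sum (fun b' _ => hPBDn (b', d))
          (Finset.mem_univ b))
      set x : ℝ := PBD (b, d) * PCD (c, d) / (P3 (b, c, d) * PD d) with hxdef
      have hxpos : 0 < x := by positivity
      have hlog := Real.log_le_sub_one_of_pos hxpos
      have hlogx : Real.log x = Real.log (PBD (b, d)) + Real.log (PCD (c, d))
          - Real.log (P3 (b, c, d)) - Real.log (PD d) := by
        rw [hxdef, Real.log_div (by positivity) (by positivity),
          Real.log_mul (ne_of_gt hBD) (ne_of_gt hCD),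
          Real.log_mul (ne_of_gt h0) (ne_of_gt hD)]
        ring
      have hmul := mul_le_mul_of_nonneg_left hlog (le_of_lt h0)
      rw [hlogx] at hmul
      have hPx : P3 (b, c, d) * x = PBD (b, d) * PCD (c, d) / PD d := by
        rw [hxdef]
        field_simp
      have e1 : P3 (b, c, d) * (Real.log (PBD (b, d)) + Real.log (PCD (c, d))
          - Real.log (P3 (b, c, d)) - Real.log (PD d))
          = P3 (b, c, d) * Real.log (PBD (b, d)) + P3 (b, c, d) * Real.log (PCD (c, d))
            - P3 (b, c, d) * Real.log (P3 (b, c, d)) - P3 (b, c, d) * Real.log (PD d) := by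
        ring
      have e2 : P3 (b, c, d) * (x - 1) = P3 (b, c, d) * x - P3 (b, c, d) := by ring
      rw [e1, e2, hPx] at hmul
      simp only [Real.negMulLog, neg_mul]
      linarith
  -- total of correction terms is zero
  have totX : (∑ b, ∑ c, ∑ d, PBD (b, d) * PCD (c, d) / PD d) = ∑ d, PD d := by
    rw [← comm3]
    refine Finset.sum_congr rfl fun d _ => ?_
    have inner : ∀ b, (∑ c, PBD (b, d) * PCD (c, d) / PD d)
        = PBD (b, d) * PD d / PD d := by
      intro b
      rw [← Finset.sum_div, ← Finset.mul_sum, ← M4]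
    rw [Finset.sum_congr rfl fun b _ => inner b, ← Finset.sum_div, ← Finset.sum_mul, ← M3]
    rcases eq_or_lt_of_le (hPDn d) with h0 | h0
    · rw [← h0]; simp
    · field_simp
  have totY : (∑ b, ∑ c, ∑ d, P3 (b, c, d)) = ∑ d, PD d := by
    rw [← comm3]
    refine Finset.sum_congr rfl fun d _ => ?_
    rw [M3]
    exact Finset.sum_congr rfl fun b _ => (M1 b d).symm
  -- assemble
  rw [T3, TD, TBD, TCD]
  have expand : ∀ b c d, (-(P3 (b, c, d)) * Real.log (PBD (b, d)))
      + (-(P3 (b, c, d)) * Real.log (PCD (c, d)))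
      + (PBD (b, d) * PCD (c, d) / PD d - P3 (b, c, d))
      = ((-(P3 (b, c, d)) * Real.log (PBD (b, d)))
      + (-(P3 (b, c, d)) * Real.log (PCD (c, d))))
      + (PBD (b, d) * PCD (c, d) / PD d - P3 (b, c, d)) := fun b c d => by ring
  calc (∑ b, ∑ c, ∑ d, Real.negMulLog (P3 (b, c, d)))
        + (∑ b, ∑ c, ∑ d, -(P3 (b, c, d)) * Real.log (PD d))
      = ∑ b, ∑ c, ∑ d, (Real.negMulLog (P3 (b, c, d))
          + (-(P3 (b, c, d)) * Real.log (PD d))) := by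
        simp [Finset.sum_add_distrib]
    _ ≤ ∑ b, ∑ c, ∑ d, ((-(P3 (b, c, d)) * Real.log (PBD (b, d)))
          + (-(P3 (b, c, d)) * Real.log (PCD (c, d)))
          + (PBD (b, d) * PCD (c, d) / PD d - P3 (b, c, d))) := by
        refine Finset.sum_le_sum fun b _ => Finset.sum_le_sum fun c _ =>
          Finset.sum_le_sum fun d _ => key b c d
    _ = (∑ b, ∑ c, ∑ d, -(P3 (b, c, d)) * Real.log (PBD (b, d)))
        + (∑ b, ∑ c, ∑ d, -(P3 (b, c, d)) * Real.log (PCD (c, d)))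
        + ((∑ b, ∑ c, ∑ d, PBD (b, d) * PCD (c, d) / PD d)
          - (∑ b, ∑ c, ∑ d, P3 (b, c, d))) := by
        simp [Finset.sum_add_distrib, Finset.sum_sub_distrib]
        try ring
    _ = (∑ b, ∑ c, ∑ d, -(P3 (b, c, d)) * Real.log (PBD (b, d)))
        + (∑ b, ∑ c, ∑ d, -(P3 (b, c, d)) * Real.log (PCD (c, d))) := by
        rw [totX, totY]
        ring

end Submod

lemma Hm_comp_eq (hp : ∀ a, 0 ≤ p a) (f : A → B) (g : B → C) (g' : C → B)
    (hg : ∀ a, g' (g (f a)) = f a) : Hm p (fun a => g (f a)) = Hm p f := by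
  refine le_antisymm (Hm_comp_le hp f g) ?_
  have h2 := Hm_comp_le hp (fun a => g (f a)) g'
  rwa [show (fun a => g' (g (f a))) = f from funext hg] at h2

lemma Hm_unit (hsum : ∑ a, p a = 1) : Hm p (fun _ => (() : Unit)) = 0 := by
  rw [Hm]
  have : fm p (fun _ => (() : Unit)) () = 1 := by
    rw [← hsum, fm]
    refine Finset.sum_congr rfl fun a _ => ?_
    simp
  simp [this]

lemma Hm_pair_le (hp : ∀ a, 0 ≤ p a) (hsum : ∑ a, p a = 1) (f : A → B) (g : A → C) :
    Hm p (fun a => (f a, g a)) ≤ Hm p f + Hm p g := by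
  have hsub := Submod.Hm_submod hp f g (fun _ => (() : Unit))
  have e1 : Hm p (fun a => (f a, g a, ())) = Hm p (fun a => (f a, g a)) := by
    have := Hm_comp_eq hp (fun a => (f a, g a)) (fun x => (x.1, x.2, ()))
      (fun y => (y.1, y.2.1)) (fun a => rfl)
    exact this
  have e2 : Hm p (fun a => (f a, (() : Unit))) = Hm p f := by
    exact Hm_comp_eq hp f (fun x => (x, ())) (fun y => y.1) (fun a => rfl)
  have e3 : Hm p (fun a => (g a, (() : Unit))) = Hm p g := by
    exact Hm_comp_eq hp g (fun x => (x, ())) (fun y => y.1) (fun a => rfl)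
  rw [Hm_unit hsum, e1, e2, e3] at hsub
  linarith
section Coupling

variable {E : Type*} [Fintype E]

/-- fiberwise regrouping -/
lemma sum_fiber (Sm : A → E) (t : A → ℝ) :
    ∑ a, t a = ∑ s, ∑ a, if Sm a = s then t a else 0 := by
  rw [Finset.sum_comm]
  refine Finset.sum_congr rfl fun a _ => ?_
  simp [Finset.sum_ite_eq]

open Classical in
/-- conditionally independent coupling given the value of `Sm` -/
noncomputable def cp (p : A → ℝ) (Sm : A → E) : A × A → ℝ :=
  fun w => if Sm w.1 = Sm w.2 then p w.1 * p w.2 / fm p Sm (Sm w.1) else 0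

variable {Sm : A → E}

lemma cp_nonneg (hp : ∀ a, 0 ≤ p a) (w : A × A) : 0 ≤ cp p Sm w := by
  rw [cp]
  split
  · exact div_nonneg (mul_nonneg (hp _) (hp _)) (fm_nonneg hp _ _)
  · exact le_refl _
  
lemma cp_support (w : A × A) (h : cp p Sm w ≠ 0) : Sm w.1 = Sm w.2 := by
  by_contra hc
  rw [cp, if_neg hc] at h
  exact h rfl

lemma cp_margin_fst (hp : ∀ a, 0 ≤ p a) (u : A) : (∑ v, cp p Sm (u, v)) = p u := by
  by_cases h0 : fm p Sm (Sm u) = 0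
  · have hpu : p u = 0 := fm_eq_zero_of hp h0 rfl
    rw [show p u = 0 from hpu]
    refine Finset.sum_eq_zero fun v _ => ?_
    rw [cp]
    split <;> simp [hpu]
  · calc (∑ v, cp p Sm (u, v))
        = ∑ v, (p u / fm p Sm (Sm u)) * (if Sm v = Sm u then p v else 0) := by
          refine Finset.sum_congr rfl fun v _ => ?_
          rw [cp]
          by_cases h : Sm u = Sm v
          · rw [if_pos h, if_pos h.symm]
            ring
          · rw [if_neg h, if_neg (fun hh => h hh.symm)]
            ring
      _ = (p u / fm p Sm (Sm u)) * fm p Sm (Sm u) := by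
          rw [← Finset.mul_sum]
          rfl
      _ = p u := div_mul_cancel₀ (p u) h0

lemma cp_margin_snd (hp : ∀ a, 0 ≤ p a) (v : A) : (∑ u, cp p Sm (u, v)) = p v := by
  by_cases h0 : fm p Sm (Sm v) = 0
  · have hpv : p v = 0 := fm_eq_zero_of hp h0 rfl
    rw [show p v = 0 from hpv]
    refine Finset.sum_eq_zero fun u _ => ?_
    rw [cp]
    split <;> simp [hpv]
  · calc (∑ u, cp p Sm (u, v))
        = ∑ u, (p v / fm p Sm (Sm v)) * (if Sm u = Sm v then p u else 0) := by
          refine Finset.sum_congr rfl fun u _ => ?_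
          rw [cp]
          by_cases h : Sm u = Sm v
          · rw [if_pos h, if_pos h, h]
            ring
          · rw [if_neg h, if_neg h]
            ring
      _ = (p v / fm p Sm (Sm v)) * fm p Sm (Sm v) := by
          rw [← Finset.mul_sum]
          rfl
      _ = p v := div_mul_cancel₀ (p v) h0

lemma cp_fm_fst (hp : ∀ a, 0 ≤ p a) (φ : A → B) (b : B) :
    fm (cp p Sm) (fun w => φ w.1) b = fm p φ b := by
  rw [fm, fm, Fintype.sum_prod_type]
  refine Finset.sum_congr rfl fun u _ => ?_
  by_cases h : φ u = b
  · simp only [h, if_true]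
    exact cp_margin_fst hp u
  · simp [h]

lemma cp_fm_snd (hp : ∀ a, 0 ≤ p a) (φ : A → B) (b : B) :
    fm (cp p Sm) (fun w => φ w.2) b = fm p φ b := by
  rw [fm, fm, Fintype.sum_prod_type_right]
  refine Finset.sum_congr rfl fun v _ => ?_
  by_cases h : φ v = b
  · simp only [h, if_true]
    exact cp_margin_snd hp v
  · simp [h]

lemma cp_Hm_fst (hp : ∀ a, 0 ≤ p a) (φ : A → B) :
    Hm (cp p Sm) (fun w => φ w.1) = Hm p φ := by
  rw [Hm, Hm]
  exact Finset.sum_congr rfl fun b _ => by rw [cp_fm_fst hp]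

lemma cp_Hm_snd (hp : ∀ a, 0 ≤ p a) (φ : A → B) :
    Hm (cp p Sm) (fun w => φ w.2) = Hm p φ := by
  rw [Hm, Hm]
  exact Finset.sum_congr rfl fun b _ => by rw [cp_fm_snd hp]

lemma cp_sum (hp : ∀ a, 0 ≤ p a) : ∑ w, cp p Sm w = ∑ a, p a := by
  rw [Fintype.sum_prod_type]
  exact Finset.sum_congr rfl fun u _ => cp_margin_fst hp u

lemma cp_Hm_id (hp : ∀ a, 0 ≤ p a) :
    Hm (cp p Sm) (fun w => w) = 2 * Hm p (fun a => a) - Hm p Sm := by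
  classical
  set F : E → ℝ := fm p Sm with hF
  set G : E → ℝ := fun s => ∑ v, if Sm v = s then Real.negMulLog (p v) else 0 with hG
  have hFnn : ∀ s, 0 ≤ F s := fun s => fm_nonneg hp _ s
  have hFzero : ∀ s, F s = 0 → G s = 0 := by
    intro s hs
    rw [hG]
    refine Finset.sum_eq_zero fun v _ => ?_
    by_cases h : Sm v = s
    · rw [if_pos h, fm_eq_zero_of hp hs h, Real.negMulLog_zero]
    · rw [if_neg h]
  -- pointwise expansion
  have step1 : ∀ u v, Sm u = Sm v →
      Real.negMulLog (cp p Sm (u, v))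
        = (p v / F (Sm u)) * Real.negMulLog (p u)
          + (p u / F (Sm u)) * Real.negMulLog (p v)
          - (p u * p v / (F (Sm u) * F (Sm u))) * Real.negMulLog (F (Sm u)) := by
    intro u v h
    rw [cp, if_pos h]
    by_cases hu : p u = 0
    · simp [hu]
    by_cases hv : p v = 0
    · simp [hv]
    have hFu : F (Sm u) ≠ 0 := by
      intro hc
      exact hu (fm_eq_zero_of hp hc rfl)
    simp only [Real.negMulLog, hF]
    rw [Real.log_div (mul_ne_zero hu hv) hFu, Real.log_mul hu hv]
    field_simp
    ring
  -- sum over v for fixed u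
  have step2 : ∀ u, (∑ v, Real.negMulLog (cp p Sm (u, v)))
      = Real.negMulLog (p u) + (p u / F (Sm u)) * G (Sm u)
        - (p u / F (Sm u)) * Real.negMulLog (F (Sm u)) := by
    intro u
    by_cases h0 : F (Sm u) = 0
    · have hpu : p u = 0 := fm_eq_zero_of hp h0 rfl
      have hz : ∀ v, cp p Sm (u, v) = 0 := by
        intro v
        rw [cp]
        split <;> simp [hpu]
      simp [hz, hpu]
    · calc (∑ v, Real.negMulLog (cp p Sm (u, v)))
          = ∑ v, (if Sm v = Sm u then
              ((p v / F (Sm u)) * Real.negMulLog (p u)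
               + (p u / F (Sm u)) * Real.negMulLog (p v)
               - (p u * p v / (F (Sm u) * F (Sm u))) * Real.negMulLog (F (Sm u))) else 0) := by
            refine Finset.sum_congr rfl fun v _ => ?_
            by_cases h : Sm u = Sm v
            · rw [if_pos h.symm, step1 u v h]
            · rw [if_neg (fun hh => h hh.symm), cp, if_neg h, Real.negMulLog_zero]
        _ = (∑ v, (if Sm v = Sm u then (p v / F (Sm u)) * Real.negMulLog (p u) else 0))
            + (∑ v, (if Sm v = Sm u then (p u / F (Sm u)) * Real.negMulLog (p v) else 0))
            - (∑ v, (if Sm v = Sm u then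
                (p u * p v / (F (Sm u) * F (Sm u))) * Real.negMulLog (F (Sm u)) else 0)) := by
            rw [← Finset.sum_add_distrib, ← Finset.sum_sub_distrib]
            refine Finset.sum_congr rfl fun v _ => ?_
            split <;> simp
        _ = Real.negMulLog (p u) + (p u / F (Sm u)) * G (Sm u)
            - (p u / F (Sm u)) * Real.negMulLog (F (Sm u)) := by
            congr 1
            · congr 1
              · -- first: pull out constants, sum p v over fiber = F (Sm u)
                have : ∀ v, (if Sm v = Sm u then (p v / F (Sm u)) * Real.negMulLog (p u) else 0)
                    = (Real.negMulLog (p u) / F (Sm u)) * (if Sm v = Sm u then p v else 0) := by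
                  intro v
                  split <;> ring
                rw [Finset.sum_congr rfl fun v _ => this v, ← Finset.mul_sum]
                show Real.negMulLog (p u) / F (Sm u) * F (Sm u) = _
                rw [div_mul_cancel₀ _ h0]
              · -- second
                have : ∀ v, (if Sm v = Sm u then (p u / F (Sm u)) * Real.negMulLog (p v) else 0)
                    = (p u / F (Sm u)) * (if Sm v = Sm u then Real.negMulLog (p v) else 0) := by
                  intro v
                  split <;> ring
                rw [Finset.sum_congr rfl fun v _ => this v, ← Finset.mul_sum]
            · -- third
              have : ∀ v, (if Sm v = Sm u then
                  (p u * p v / (F (Sm u) * F (Sm u))) * Real.negMulLog (F (Sm u)) else 0)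
                  = ((p u / (F (Sm u) * F (Sm u))) * Real.negMulLog (F (Sm u)))
                    * (if Sm v = Sm u then p v else 0) := by
                intro v
                split <;> ring
              rw [Finset.sum_congr rfl fun v _ => this v, ← Finset.mul_sum]
              show (p u / (F (Sm u) * F (Sm u))) * Real.negMulLog (F (Sm u)) * F (Sm u) = _
              field_simp
  -- main assembly
  have expand : Hm (cp p Sm) (fun w => w) = ∑ u, ∑ v, Real.negMulLog (cp p Sm (u, v)) := by
    rw [Hm, Fintype.sum_prod_type]
    refine Finset.sum_congr rfl fun u _ => Finset.sum_congr rfl fun v _ => ?_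
    congr 1
    exact fm_id (u, v)
  have hJ : Hm p (fun a => a) = ∑ a, Real.negMulLog (p a) := by
    rw [Hm]
    exact Finset.sum_congr rfl fun a _ => congrArg Real.negMulLog (fm_id a)
  rw [expand, Finset.sum_congr rfl fun u _ => step2 u]
  rw [Finset.sum_sub_distrib, Finset.sum_add_distrib]
  have sum1 : (∑ u, Real.negMulLog (p u)) = Hm p (fun a => a) := hJ.symm
  have sum2 : (∑ u, (p u / F (Sm u)) * G (Sm u)) = Hm p (fun a => a) := by
    rw [sum_fiber Sm (fun u => (p u / F (Sm u)) * G (Sm u))]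
    have hs : ∀ s, (∑ u, if Sm u = s then (p u / F (Sm u)) * G (Sm u) else 0) = G s := by
      intro s
      have : ∀ u, (if Sm u = s then (p u / F (Sm u)) * G (Sm u) else 0)
          = (G s / F s) * (if Sm u = s then p u else 0) := by
        intro u
        by_cases h : Sm u = s
        · rw [if_pos h, if_pos h, h]
          ring
        · rw [if_neg h, if_neg h, mul_zero]
      rw [Finset.sum_congr rfl fun u _ => this u, ← Finset.mul_sum]
      show G s / F s * F s = G s
      by_cases hFs : F s = 0
      · rw [hFs, hFzero s hFs]
        simp
      · rw [div_mul_cancel₀ _ hFs]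
    rw [Finset.sum_congr rfl fun s _ => hs s, hJ]
    rw [sum_fiber Sm (fun v => Real.negMulLog (p v))]
  have sum3 : (∑ u, (p u / F (Sm u)) * Real.negMulLog (F (Sm u))) = Hm p Sm := by
    rw [sum_fiber Sm (fun u => (p u / F (Sm u)) * Real.negMulLog (F (Sm u)))]
    have hs : ∀ s, (∑ u, if Sm u = s then (p u / F (Sm u)) * Real.negMulLog (F (Sm u)) else 0)
        = Real.negMulLog (F s) := by
      intro s
      have : ∀ u, (if Sm u = s then (p u / F (Sm u)) * Real.negMulLog (F (Sm u)) else 0)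
          = (Real.negMulLog (F s) / F s) * (if Sm u = s then p u else 0) := by
        intro u
        by_cases h : Sm u = s
        · rw [if_pos h, if_pos h, h]
          ring
        · rw [if_neg h, if_neg h, mul_zero]
      rw [Finset.sum_congr rfl fun u _ => this u, ← Finset.mul_sum]
      show Real.negMulLog (F s) / F s * F s = Real.negMulLog (F s)
      by_cases hFs : F s = 0
      · rw [hFs]
        simp
      · rw [div_mul_cancel₀ _ hFs]
    rw [Finset.sum_congr rfl fun s _ => hs s]
    rfl
  rw [sum1, sum2, sum3]
  ring

end Coupling

section Bridge

open MeasureTheory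

variable {Ω : Type*} [MeasurableSpace Ω] (μ : MeasureTheory.Measure Ω)
variable [MeasureTheory.IsProbabilityMeasure μ]
variable [MeasurableSpace A] [MeasurableSingletonClass A]
variable {Z : Ω → A}

/-- the pmf of `Z` -/
noncomputable def pZ (μ : MeasureTheory.Measure Ω) (Z : Ω → A) : A → ℝ :=
  fun a => (μ (Z ⁻¹' {a})).toReal

lemma pZ_nonneg (a : A) : 0 ≤ pZ μ Z a := ENNReal.toReal_nonneg

lemma pZ_fiber (hZ : Measurable Z) {B : Type*} (g : A → B) (t : B) :
    (μ ((fun ω => g (Z ω)) ⁻¹' {t})).toReal = fm (pZ μ Z) g t := by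
  classical
  have hset : ((fun ω => g (Z ω)) ⁻¹' {t})
      = ⋃ a ∈ Finset.univ.filter (fun a => g a = t), Z ⁻¹' {a} := by
    ext ω
    simp only [Set.mem_preimage, Set.mem_singleton_iff, Set.mem_iUnion,
      Finset.mem_filter, Finset.mem_univ, true_and]
    constructor
    · intro h
      exact ⟨Z ω, h, rfl⟩
    · rintro ⟨a, ha, h2⟩
      rw [h2]
      exact ha
  rw [hset, MeasureTheory.measure_biUnion_finset ?disj ?meas]
  case disj =>
    intro a _ a' _ haa'
    exact Set.disjoint_left.2 fun ω h1 h2 => haa' (by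
      simp only [Set.mem_preimage, Set.mem_singleton_iff] at h1 h2
      rw [← h1, ← h2])
  case meas =>
    intro a _
    exact hZ (measurableSet_singleton a)
  rw [ENNReal.toReal_sum (fun a _ => MeasureTheory.measure_ne_top μ _)]
  rw [fm, ← Finset.sum_filter]
  exact Finset.sum_congr rfl fun a _ => rfl

lemma pZ_sum (hZ : Measurable Z) : ∑ a, pZ μ Z a = 1 := by
  classical
  have h := pZ_fiber μ hZ (fun _ => (() : Unit)) ()
  have h2 : ((fun ω => (() : Unit)) ⁻¹' {()}) = (Set.univ : Set Ω) := by
    ext ω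
    simp
  simp only [h2, MeasureTheory.measure_univ, ENNReal.toReal_one] at h
  have h3 : fm (pZ μ Z) (fun _ => (() : Unit)) () = ∑ a, pZ μ Z a :=
    Finset.sum_congr rfl fun a _ => by simp
  rw [← h3]
  exact h.symm

lemma ent_eq_Hm {B : Type*} [Fintype B] (hZ : Measurable Z) (g : A → B) :
    ent μ (fun ω => g (Z ω)) = Hm (pZ μ Z) g := by
  rw [ent, Hm]
  exact Finset.sum_congr rfl fun t _ => by rw [pZ_fiber μ hZ g t]

end Bridge

end EntAux

open EntAux

theorem stmt8 {Ω G : Type*} [MeasurableSpace Ω] [AddCommGroup G] [Fintype G]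
    [MeasurableSpace G] [MeasurableSingletonClass G]
    (μ : Measure Ω) [IsProbabilityMeasure μ]
    (X Y : Ω → G) (hX : Measurable X) (hY : Measurable Y) :
    ent μ (fun ω => X ω - Y ω) ≤
      (2/3) * ent μ X + (2/3) * ent μ Y + (1/2) * ent μ (fun ω => X ω + Y ω) := by
  classical
  have hZ : Measurable (fun ω => (X ω, Y ω)) := hX.prodMk hY
  set p : G × G → ℝ := pZ μ (fun ω => (X ω, Y ω)) with hpdef
  have hp : ∀ z, 0 ≤ p z := fun z => pZ_nonneg μ z
  have hsum : ∑ z, p z = 1 := pZ_sum μ hZ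
  set Sm : G × G → G := fun z => z.1 + z.2 with hSmdef
  set q : (G × G) × (G × G) → ℝ := cp p Sm with hqdef
  have hq : ∀ w, 0 ≤ q w := fun w => cp_nonneg hp w
  have hqsum : ∑ w, q w = 1 := by rw [hqdef, cp_sum hp]; exact hsum
  have hsupp : ∀ w : (G × G) × (G × G), q w ≠ 0 → w.1.1 + w.1.2 = w.2.1 + w.2.2 := by
    intro w hw
    exact cp_support w hw
  -- bridges to `ent`
  have hbX : ent μ X = Hm p (fun z : G × G => z.1) := ent_eq_Hm μ hZ (fun z => z.1)
  have hbY : ent μ Y = Hm p (fun z : G × G => z.2) := ent_eq_Hm μ hZ (fun z => z.2)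
  have hbS : ent μ (fun ω => X ω + Y ω) = Hm p Sm := ent_eq_Hm μ hZ Sm
  have hbD : ent μ (fun ω => X ω - Y ω) = Hm p (fun z : G × G => z.1 - z.2) :=
    ent_eq_Hm μ hZ (fun z => z.1 - z.2)
  -- p-level: H(D) ≤ H(X,Y)
  have hdJ : Hm p (fun z : G × G => z.1 - z.2) ≤ Hm p (fun z : G × G => z) :=
    Hm_comp_le hp (fun z => z) (fun z => z.1 - z.2)
  -- K identity
  have hK : Hm q (fun w => w) = 2 * Hm p (fun z : G × G => z) - Hm p Sm := cp_Hm_id hp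
  -- marginals
  have hXa : Hm q (fun w => w.1.1) = Hm p (fun z : G × G => z.1) :=
    cp_Hm_fst hp (fun z => z.1)
  have hYb : Hm q (fun w => w.1.2) = Hm p (fun z : G × G => z.2) :=
    cp_Hm_fst hp (fun z => z.2)
  have hX2 : Hm q (fun w => w.2.1) = Hm p (fun z : G × G => z.1) :=
    cp_Hm_snd hp (fun z => z.1)
  have hY2 : Hm q (fun w => w.2.2) = Hm p (fun z : G × G => z.2) :=
    cp_Hm_snd hp (fun z => z.2)
  have hDq : Hm q (fun w => w.1.1 - w.1.2) = Hm p (fun z : G × G => z.1 - z.2) :=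
    cp_Hm_fst hp (fun z => z.1 - z.2)
  -- step (A): K + H(W) ≤ 2a + 2b
  have hA1 : Hm q (fun w => (w.1.1, w.1.2, w.1.1 - w.2.2)) + Hm q (fun w => w.1.1 - w.2.2)
      ≤ Hm q (fun w => (w.1.1, w.1.1 - w.2.2)) + Hm q (fun w => (w.1.2, w.1.1 - w.2.2)) :=
    Submod.Hm_submod hq (fun w => w.1.1) (fun w => w.1.2) (fun w => w.1.1 - w.2.2)
  have hA2 : Hm q (fun w => w) ≤ Hm q (fun w => (w.1.1, w.1.2, w.1.1 - w.2.2)) := by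
    have step := Hm_comp_le hq (fun w => (w.1.1, w.1.2, w.1.1 - w.2.2))
      (fun t : G × G × G => ((t.1, t.2.1), (t.2.1 + t.2.2, t.1 - t.2.2)))
    have hcongr : Hm q (fun w =>
        ((w.1.1, w.1.2), (w.1.2 + (w.1.1 - w.2.2), w.1.1 - (w.1.1 - w.2.2)))) = Hm q (fun w => w) :=
      Hm_congr hq (fun w hw => by
        have hs := hsupp w hw
        have e1 : w.1.2 + (w.1.1 - w.2.2) = w.2.1 := by
          have : w.1.2 + (w.1.1 - w.2.2) = w.1.1 + w.1.2 - w.2.2 := by abel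
          rw [this, hs]
          abel
        have e2 : w.1.1 - (w.1.1 - w.2.2) = w.2.2 := sub_sub_cancel _ _
        rw [e1, e2])
    calc Hm q (fun w => w)
        = Hm q (fun w => ((w.1.1, w.1.2), (w.1.2 + (w.1.1 - w.2.2), w.1.1 - (w.1.1 - w.2.2)))) :=
          hcongr.symm
      _ ≤ Hm q (fun w => (w.1.1, w.1.2, w.1.1 - w.2.2)) := step
  have hA3 : Hm q (fun w => (w.1.1, w.1.1 - w.2.2))
      ≤ Hm p (fun z : G × G => z.1) + Hm p (fun z : G × G => z.2) := by
    have e : Hm q (fun w => (w.1.1, w.1.1 - w.2.2)) = Hm q (fun w => (w.1.1, w.2.2)) :=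
      Hm_comp_eq hq (fun w => (w.1.1, w.2.2)) (fun t : G × G => (t.1, t.1 - t.2))
        (fun t => (t.1, t.1 - t.2)) (fun w => by simp)
    have le := Hm_pair_le hq hqsum (fun w : (G × G) × (G × G) => w.1.1) (fun w => w.2.2)
    rw [hXa, hY2] at le
    rw [e]
    exact le
  have hA4 : Hm q (fun w => (w.1.2, w.1.1 - w.2.2))
      ≤ Hm p (fun z : G × G => z.2) + Hm p (fun z : G × G => z.1) := by
    have e1 : Hm q (fun w => (w.1.2, w.1.1 - w.2.2))
        = Hm q (fun w => (w.1.2, w.2.1 - w.1.2)) :=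
      Hm_congr hq (fun w hw => by
        have hs := hsupp w hw
        have : w.1.1 - w.2.2 = w.2.1 - w.1.2 := by
          have h2 : w.1.1 - w.2.2 = w.1.1 + w.1.2 - w.2.2 - w.1.2 := by abel
          rw [h2, hs]
          abel
        rw [this])
    have e2 : Hm q (fun w => (w.1.2, w.2.1 - w.1.2)) = Hm q (fun w => (w.1.2, w.2.1)) :=
      Hm_comp_eq hq (fun w => (w.1.2, w.2.1)) (fun t : G × G => (t.1, t.2 - t.1))
        (fun t => (t.1, t.2 + t.1)) (fun w => by simp)
    have le := Hm_pair_le hq hqsum (fun w : (G × G) × (G × G) => w.1.2) (fun w => w.2.1)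
    rw [hYb, hX2] at le
    rw [e1, e2]
    exact le
  -- step (B): K + H(V) ≤ 2a + 2b
  have hB1 : Hm q (fun w => (w.1.1, w.1.2, w.1.1 - w.2.1)) + Hm q (fun w => w.1.1 - w.2.1)
      ≤ Hm q (fun w => (w.1.1, w.1.1 - w.2.1)) + Hm q (fun w => (w.1.2, w.1.1 - w.2.1)) :=
    Submod.Hm_submod hq (fun w => w.1.1) (fun w => w.1.2) (fun w => w.1.1 - w.2.1)
  have hB2 : Hm q (fun w => w) ≤ Hm q (fun w => (w.1.1, w.1.2, w.1.1 - w.2.1)) := by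
    have step := Hm_comp_le hq (fun w => (w.1.1, w.1.2, w.1.1 - w.2.1))
      (fun t : G × G × G => ((t.1, t.2.1), (t.1 - t.2.2, t.2.1 + t.2.2)))
    have hcongr : Hm q (fun w =>
        ((w.1.1, w.1.2), (w.1.1 - (w.1.1 - w.2.1), w.1.2 + (w.1.1 - w.2.1)))) = Hm q (fun w => w) :=
      Hm_congr hq (fun w hw => by
        have hs := hsupp w hw
        have e1 : w.1.1 - (w.1.1 - w.2.1) = w.2.1 := sub_sub_cancel _ _
        have e2 : w.1.2 + (w.1.1 - w.2.1) = w.2.2 := by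
          have : w.1.2 + (w.1.1 - w.2.1) = w.1.1 + w.1.2 - w.2.1 := by abel
          rw [this, hs]
          abel
        rw [e1, e2])
    calc Hm q (fun w => w)
        = Hm q (fun w => ((w.1.1, w.1.2), (w.1.1 - (w.1.1 - w.2.1), w.1.2 + (w.1.1 - w.2.1)))) :=
          hcongr.symm
      _ ≤ Hm q (fun w => (w.1.1, w.1.2, w.1.1 - w.2.1)) := step
  have hB3 : Hm q (fun w => (w.1.1, w.1.1 - w.2.1))
      ≤ Hm p (fun z : G × G => z.1) + Hm p (fun z : G × G => z.1) := by
    have e : Hm q (fun w => (w.1.1, w.1.1 - w.2.1)) = Hm q (fun w => (w.1.1, w.2.1)) :=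
      Hm_comp_eq hq (fun w => (w.1.1, w.2.1)) (fun t : G × G => (t.1, t.1 - t.2))
        (fun t => (t.1, t.1 - t.2)) (fun w => by simp)
    have le := Hm_pair_le hq hqsum (fun w : (G × G) × (G × G) => w.1.1) (fun w => w.2.1)
    rw [hXa, hX2] at le
    rw [e]
    exact le
  have hB4 : Hm q (fun w => (w.1.2, w.1.1 - w.2.1))
      ≤ Hm p (fun z : G × G => z.2) + Hm p (fun z : G × G => z.2) := by
    have e1 : Hm q (fun w => (w.1.2, w.1.1 - w.2.1))
        = Hm q (fun w => (w.1.2, w.2.2 - w.1.2)) :=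
      Hm_congr hq (fun w hw => by
        have hs := hsupp w hw
        have : w.1.1 - w.2.1 = w.2.2 - w.1.2 := by
          have h2 : w.1.1 - w.2.1 = w.1.1 + w.1.2 - w.2.1 - w.1.2 := by abel
          rw [h2, hs]
          abel
        rw [this])
    have e2 : Hm q (fun w => (w.1.2, w.2.2 - w.1.2)) = Hm q (fun w => (w.1.2, w.2.2)) :=
      Hm_comp_eq hq (fun w => (w.1.2, w.2.2)) (fun t : G × G => (t.1, t.2 - t.1))
        (fun t => (t.1, t.2 + t.1)) (fun w => by simp)
    have le := Hm_pair_le hq hqsum (fun w : (G × G) × (G × G) => w.1.2) (fun w => w.2.2)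
    rw [hYb, hY2] at le
    rw [e1, e2]
    exact le
  -- step (C): K + H(D) ≤ J + H(W) + H(V)
  have hC1 : Hm q (fun w => (w.1.1, w.1.1 - w.2.2, w.1.1 - w.1.2)) + Hm q (fun w => w.1.1 - w.1.2)
      ≤ Hm q (fun w => (w.1.1, w.1.1 - w.1.2)) + Hm q (fun w => (w.1.1 - w.2.2, w.1.1 - w.1.2)) :=
    Submod.Hm_submod hq (fun w => w.1.1) (fun w => w.1.1 - w.2.2) (fun w => w.1.1 - w.1.2)
  have hC2 : Hm q (fun w => w) ≤ Hm q (fun w => (w.1.1, w.1.1 - w.2.2, w.1.1 - w.1.2)) := by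
    have step := Hm_comp_le hq (fun w => (w.1.1, w.1.1 - w.2.2, w.1.1 - w.1.2))
      (fun t : G × G × G => ((t.1, t.1 - t.2.2), (t.1 - t.2.2 + t.2.1, t.1 - t.2.1)))
    have hcongr : Hm q (fun w =>
        ((w.1.1, w.1.1 - (w.1.1 - w.1.2)),
          (w.1.1 - (w.1.1 - w.1.2) + (w.1.1 - w.2.2), w.1.1 - (w.1.1 - w.2.2))))
        = Hm q (fun w => w) :=
      Hm_congr hq (fun w hw => by
        have hs := hsupp w hw
        have e1 : w.1.1 - (w.1.1 - w.1.2) = w.1.2 := sub_sub_cancel _ _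
        have e2 : w.1.1 - (w.1.1 - w.2.2) = w.2.2 := sub_sub_cancel _ _
        have e3 : w.1.1 - (w.1.1 - w.1.2) + (w.1.1 - w.2.2) = w.2.1 := by
          rw [e1]
          have : w.1.2 + (w.1.1 - w.2.2) = w.1.1 + w.1.2 - w.2.2 := by abel
          rw [this, hs]
          abel
        rw [e3, e1, e2])
    calc Hm q (fun w => w)
        = Hm q (fun w =>
            ((w.1.1, w.1.1 - (w.1.1 - w.1.2)),
              (w.1.1 - (w.1.1 - w.1.2) + (w.1.1 - w.2.2), w.1.1 - (w.1.1 - w.2.2)))) :=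
          hcongr.symm
      _ ≤ Hm q (fun w => (w.1.1, w.1.1 - w.2.2, w.1.1 - w.1.2)) := step
  have hC3 : Hm q (fun w => (w.1.1, w.1.1 - w.1.2)) = Hm p (fun z : G × G => z) := by
    have e1 : Hm q (fun w => (w.1.1, w.1.1 - w.1.2)) = Hm p (fun z : G × G => (z.1, z.1 - z.2)) :=
      cp_Hm_fst hp (fun z => (z.1, z.1 - z.2))
    have e2 : Hm p (fun z : G × G => (z.1, z.1 - z.2)) = Hm p (fun z : G × G => z) :=
      Hm_comp_eq hp (fun z => z) (fun z : G × G => (z.1, z.1 - z.2))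
        (fun t => (t.1, t.1 - t.2)) (fun z => by simp)
    rw [e1, e2]
  have hC4 : Hm q (fun w => (w.1.1 - w.2.2, w.1.1 - w.1.2))
      ≤ Hm q (fun w => w.1.1 - w.2.2) + Hm q (fun w => w.1.1 - w.2.1) := by
    have e1 : Hm q (fun w => (w.1.1 - w.2.2, w.1.1 - w.1.2))
        = Hm q (fun w => (w.1.1 - w.2.2, w.1.1 - w.2.2 + (w.1.1 - w.2.1))) :=
      Hm_congr hq (fun w hw => by
        have hs := hsupp w hw
        have : w.1.1 - w.2.2 + (w.1.1 - w.2.1) = w.1.1 + w.1.1 - (w.2.1 + w.2.2) := by abel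
        rw [this, ← hs]
        have : w.1.1 + w.1.1 - (w.1.1 + w.1.2) = w.1.1 - w.1.2 := by abel
        rw [this])
    have e2 : Hm q (fun w => (w.1.1 - w.2.2, w.1.1 - w.2.2 + (w.1.1 - w.2.1)))
        = Hm q (fun w => (w.1.1 - w.2.2, w.1.1 - w.2.1)) :=
      Hm_comp_eq hq (fun w => (w.1.1 - w.2.2, w.1.1 - w.2.1))
        (fun t : G × G => (t.1, t.1 + t.2)) (fun t => (t.1, t.2 - t.1))
        (fun w => by simp)
    rw [e1, e2]
    exact Hm_pair_le hq hqsum (fun w => w.1.1 - w.2.2) (fun w => w.1.1 - w.2.1)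
  -- assemble
  have main : 6 * Hm p (fun z : G × G => z.1 - z.2)
      ≤ 4 * Hm p (fun z : G × G => z.1) + 4 * Hm p (fun z : G × G => z.2) + 3 * Hm p Sm := by
    linarith [hA1, hA2, hA3, hA4, hB1, hB2, hB3, hB4, hC1, hC2, hC3, hC4, hK, hdJ, hDq]
  rw [hbX, hbY, hbS, hbD]
  linarith [main]
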